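/- (Theorem 3.1) Let I be a finite nonempty itemset, Y a probability mass function on I with Y(i) > 0 for all i, M : I → ℝ a score function, and T > 0. Let (o_k)_{k≥1} be an i.i.d. sequence of I-valued random variables with common law Y. For each n ≥ 1 and item i ∈ I, define the two-step sampling probability P_n(i) = [∑_{k=1}^n 1(o_k = i)] · exp(M(i)/T - log Y(i)) / ∑_{k=1}^n exp(M(o_k)/T - log Y(o_k)). Then almost surely, for every i ∈ I, P_n(i) converges as n → ∞ to exp(M(i)/T) / ∑_{j∈I} exp(M(j)/T). -/

import Mathlib

open scoped BigOperators
open MeasureTheory ProbabilityTheory Filter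

section Aux

variable {I : Type*} [Fintype I] [Nonempty I] [DecidableEq I]
    [MeasurableSpace I] [MeasurableSingletonClass I]
    {Ω : Type*} [MeasurableSpace Ω] {μ : Measure Ω} [IsProbabilityMeasure μ]

/-- SLLN for a function of an iid finite-valued sequence. -/
lemma slln_comp (Y : I → ℝ) (hYpos : ∀ i, 0 < Y i)
    (o : ℕ → Ω → I) (homeas : ∀ k, Measurable (o k))
    (hindep : iIndepFun o μ)
    (hlaw : ∀ k i, μ (o k ⁻¹' {i}) = ENNReal.ofReal (Y i))
    (f : I → ℝ) :
    ∀ᵐ ω ∂μ, Tendsto (fun n : ℕ => (∑ k ∈ Finset.range n, f (o k ω)) / n)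
      atTop (nhds (∑ j, Y j * f j)) := by
  have mf : Measurable f := measurable_of_countable f
  have hident : ∀ k, IdentDistrib (o k) (o 0) μ μ := by
    intro k
    refine ⟨(homeas k).aemeasurable, (homeas 0).aemeasurable, ?_⟩
    refine MeasureTheory.Measure.ext_iff_singleton.2 fun i => ?_
    rw [Measure.map_apply (homeas k) (measurableSet_singleton i),
      Measure.map_apply (homeas 0) (measurableSet_singleton i), hlaw, hlaw]
  have hidentf : ∀ k, IdentDistrib (fun ω => f (o k ω)) (fun ω => f (o 0 ω)) μ μ :=
    fun k => (hident k).comp mf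
  have hindepf : Pairwise (Function.onFun (IndepFun · · μ) fun k ω => f (o k ω)) := by
    intro k l hkl
    exact (hindep.indepFun hkl).comp mf mf
  have hbound : ∀ ω, ‖f (o 0 ω)‖ ≤ ∑ j, ‖f j‖ := by
    intro ω
    exact Finset.single_le_sum (f := fun j => ‖f j‖) (fun j _ => norm_nonneg _)
      (Finset.mem_univ _)
  have hint : Integrable (fun ω => f (o 0 ω)) μ :=
    (integrable_const (∑ j, ‖f j‖)).mono'
      (mf.comp (homeas 0)).aestronglyMeasurable (ae_of_all _ hbound)
  have hintegral : ∫ ω, f (o 0 ω) ∂μ = ∑ j, Y j * f j := by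
    haveI : IsProbabilityMeasure (Measure.map (o 0) μ) :=
      Measure.isProbabilityMeasure_map (homeas 0).aemeasurable
    rw [← integral_map (homeas 0).aemeasurable mf.aestronglyMeasurable,
      integral_fintype (Integrable.of_finite)]
    refine Finset.sum_congr rfl fun j _ => ?_
    rw [measureReal_def, Measure.map_apply (homeas 0) (measurableSet_singleton j), hlaw,
      ENNReal.toReal_ofReal (hYpos j).le, smul_eq_mul]
  have := strong_law_ae_real (fun k ω => f (o k ω)) hint hindepf hidentf
  rw [hintegral] at this
  exact this

end Aux

/-- Theorem 3.1: as the pool size `n → ∞`, the two-step sampler's selection probability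
`P_n(i) = (#{k < n : o k = i}) · exp (M i / T - log (Y i)) / ∑_{k<n} exp (M (o k) / T - log (Y (o k)))`
converges almost surely, for every item `i`, to the tempered softmax
`Q(i) = exp (M i / T) / ∑ j, exp (M j / T)`. -/
theorem two_step_sampler_tendsto_softmax {I : Type*} [Fintype I] [Nonempty I] [DecidableEq I]
    [MeasurableSpace I] [MeasurableSingletonClass I]
    {Ω : Type*} [MeasurableSpace Ω] (μ : Measure Ω) [IsProbabilityMeasure μ]
    (Y : I → ℝ) (hYpos : ∀ i, 0 < Y i) (hYsum : ∑ i, Y i = 1)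
    (M : I → ℝ) (T : ℝ) (hT : 0 < T)
    (o : ℕ → Ω → I) (homeas : ∀ k, Measurable (o k))
    (hindep : iIndepFun o μ)
    (hlaw : ∀ k i, μ (o k ⁻¹' {i}) = ENNReal.ofReal (Y i)) :
    ∀ᵐ ω ∂μ, ∀ i : I, Tendsto
      (fun n : ℕ =>
        (∑ k ∈ Finset.range n, (if o k ω = i then (1 : ℝ) else 0)) *
          Real.exp (M i / T - Real.log (Y i)) /
        ∑ k ∈ Finset.range n, Real.exp (M (o k ω) / T - Real.log (Y (o k ω))))
      atTop (nhds (Real.exp (M i / T) / ∑ j, Real.exp (M j / T))) := by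
  -- the weight function
  set w : I → ℝ := fun j => Real.exp (M j / T - Real.log (Y j)) with hw
  have hYw : ∀ j, Y j * w j = Real.exp (M j / T) := by
    intro j
    show Y j * Real.exp (M j / T - Real.log (Y j)) = _
    rw [Real.exp_sub, Real.exp_log (hYpos j)]
    field_simp
    exact div_self (hYpos j).ne'
  -- SLLN for the numerator counts, for each i
  have hnum : ∀ᵐ ω ∂μ, ∀ i : I, Tendsto
      (fun n : ℕ => (∑ k ∈ Finset.range n, (if o k ω = i then (1 : ℝ) else 0)) / n)
      atTop (nhds (Y i)) := by
    rw [ae_all_iff]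
    intro i
    have := slln_comp Y hYpos o homeas hindep hlaw (fun j => if j = i then (1 : ℝ) else 0)
    have hsum : (∑ j, Y j * if j = i then (1 : ℝ) else 0) = Y i := by
      simp [mul_ite]
    rw [hsum] at this
    filter_upwards [this] with ω hω
    exact hω.congr fun n => by simp
  -- SLLN for the denominator
  have hden : ∀ᵐ ω ∂μ, Tendsto
      (fun n : ℕ => (∑ k ∈ Finset.range n, w (o k ω)) / n)
      atTop (nhds (∑ j, Real.exp (M j / T))) := by
    have := slln_comp Y hYpos o homeas hindep hlaw w
    have hsum : (∑ j, Y j * w j) = ∑ j, Real.exp (M j / T) :=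
      Finset.sum_congr rfl fun j _ => hYw j
    rwa [hsum] at this
  have hEpos : (0 : ℝ) < ∑ j, Real.exp (M j / T) :=
    Finset.sum_pos (fun j _ => Real.exp_pos _) Finset.univ_nonempty
  filter_upwards [hnum, hden] with ω hnumω hdenω i
  have h1 : Tendsto
      (fun n : ℕ =>
        ((∑ k ∈ Finset.range n, (if o k ω = i then (1 : ℝ) else 0)) / n * w i) /
        ((∑ k ∈ Finset.range n, w (o k ω)) / n))
      atTop (nhds (Y i * w i / ∑ j, Real.exp (M j / T))) :=
    ((hnumω i).mul tendsto_const_nhds).div hdenω hEpos.ne'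
  have h2 : Y i * w i / ∑ j, Real.exp (M j / T)
      = Real.exp (M i / T) / ∑ j, Real.exp (M j / T) := by rw [hYw i]
  rw [h2] at h1
  refine h1.congr' ?_
  filter_upwards [eventually_ge_atTop 1] with n hn
  have hn0 : (n : ℝ) ≠ 0 := Nat.cast_ne_zero.2 (by omega)
  rw [div_mul_eq_mul_div, div_div_div_cancel_right₀ hn0]
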